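/- arXiv:0903.0432 — 2 statements merged into one kernel-verified Lean document; each statement's English description precedes it below -/
import Mathlib

section
/- For every 0 < c < 1 there exists a constant q₁ > 0 such that for every g admissible with constant c, every m ≥ 1, every n ≥ 0, and every sequence (x₁,…,x_m) ∈ (ℤ^d)^m: ∑_{y₁,…,y_n ∈ ℤ^d} |φ̃_{(x₁,…,x_m)}(y₁,…,y_n)| ≤ n! · q₁^{m+n} (in particular the sum converges and the bound is uniform in (x₁,…,x_m)). -/
open scoped BigOperators

/-- The lattice `ℤ^d`. -/
abbrev Zd (d : ℕ) := Fin d → ℤ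

noncomputable section

/-- `∑_{x ≠ 0} |g x|`. -/
def gNorm (d : ℕ) (g : Zd d → ℝ) : ℝ := ∑' x : {x : Zd d // x ≠ 0}, |g x.1|

/-- Summability of `|g|` off the origin. -/
def gSummable (d : ℕ) (g : Zd d → ℝ) : Prop :=
  Summable (fun x : {x : Zd d // x ≠ 0} => |g x.1|)

/-- `g` is admissible with constant `c`:  `g 0 = -1`, `g` is even, and `∑_{x≠0}|g x| ≤ c`. -/
def Admissible (d : ℕ) (g : Zd d → ℝ) (c : ℝ) : Prop :=
  g 0 = -1 ∧ (∀ x, g x = g (-x)) ∧ gSummable d g ∧ gNorm d g ≤ c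

/-- Boltzmann factors: `ψ_m(x₁,…,x_m) = ∏_{1 ≤ i < j ≤ m} (1 + g (x_i - x_j))`. -/
def boltz (d : ℕ) (g : Zd d → ℝ) (m : ℕ) (x : Fin m → Zd d) : ℝ :=
  ∏ p ∈ Finset.univ.filter (fun p : Fin m × Fin m => p.1 < p.2), (1 + g (x p.1 - x p.2))

/-- Ursell functions: `φ_m(x₁,…,x_m) = ∑_π (-1)^{|π|-1}(|π|-1)! ∏_{P ∈ π} ψ_{|P|}((x_i)_{i∈P})`,
the sum being over all partitions `π` of `{1,…,m}` into nonempty blocks. -/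
def ursell (d : ℕ) (g : Zd d → ℝ) (m : ℕ) (x : Fin m → Zd d) : ℝ :=
  ∑ π : Finpartition (Finset.univ : Finset (Fin m)),
    (-1 : ℝ) ^ (π.parts.card - 1) * (Nat.factorial (π.parts.card - 1)) *
      ∏ P ∈ π.parts, boltz d g P.card (fun i => x (P.orderIsoOfFin rfl i).1)

/-- `∑_{y₁,…,y_n ∈ ℤ^d} φ_{1+n}(0, y₁, …, y_n)`. -/
def ursellSumA (d : ℕ) (g : Zd d → ℝ) (n : ℕ) : ℝ :=
  ∑' y : Fin n → Zd d, ursell d g (n + 1) (Fin.cons 0 y)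

/-- `A(z,g) = ∑_{n ≥ 1} (z^{n-1}/n!) ∑_{y₁,…,y_n} φ_{1+n}(0,y₁,…,y_n)`. -/
def AFun (d : ℕ) (z : ℝ) (g : Zd d → ℝ) : ℝ :=
  ∑' k : ℕ, (z ^ k / (Nat.factorial (k + 1))) * ursellSumA d g (k + 1)

/-- Absolute convergence of the series defining `A(z,g)`. -/
def AConv (d : ℕ) (z : ℝ) (g : Zd d → ℝ) : Prop :=
  (∀ n : ℕ, Summable (fun y : Fin n → Zd d => |ursell d g (n + 1) (Fin.cons 0 y)|)) ∧
  Summable (fun k : ℕ => (z ^ k / (Nat.factorial (k + 1))) *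
    ∑' y : Fin (k + 1) → Zd d, |ursell d g (k + 2) (Fin.cons 0 y)|)

/-- `∑_{y₁,…,y_n ∈ ℤ^d} φ_{2+n}(0, x, y₁, …, y_n)`. -/
def ursellSumB (d : ℕ) (g : Zd d → ℝ) (x : Zd d) (n : ℕ) : ℝ :=
  ∑' y : Fin n → Zd d, ursell d g (n + 2) (Fin.cons 0 (Fin.cons x y))

/-- `B(z,g)(x) = ∑_{n ≥ 1} (z^{n-1}/n!) ∑_{y₁,…,y_n} φ_{2+n}(0,x,y₁,…,y_n)`. -/
def BFun (d : ℕ) (z : ℝ) (g : Zd d → ℝ) (x : Zd d) : ℝ :=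
  ∑' k : ℕ, (z ^ k / (Nat.factorial (k + 1))) * ursellSumB d g x (k + 1)

/-- Absolute convergence of the series defining `B(z,g)(x)`. -/
def BConv (d : ℕ) (z : ℝ) (g : Zd d → ℝ) (x : Zd d) : Prop :=
  (∀ n : ℕ, Summable (fun y : Fin n → Zd d => |ursell d g (n + 2) (Fin.cons 0 (Fin.cons x y))|)) ∧
  Summable (fun k : ℕ => (z ^ k / (Nat.factorial (k + 1))) *
    ∑' y : Fin (k + 1) → Zd d, |ursell d g (k + 3) (Fin.cons 0 (Fin.cons x y))|)

/-- The cube `Λ_k = {-k,…,k}^d`. -/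
def cube (d : ℕ) (k : ℕ) : Finset (Zd d) :=
  Fintype.piFinset (fun _ => Finset.Icc (-(k : ℤ)) (k : ℤ))

/-- The grand partition function `Ξ(Λ, z, g)`. -/
def partitionFn (d : ℕ) (g : Zd d → ℝ) (z : ℝ) (Λ : Finset (Zd d)) : ℝ :=
  ∑' n : ℕ, (z ^ n / (Nat.factorial n)) *
    ∑ x : Fin n → Λ, boltz d g n (fun i => (x i).1)

/-- The finite-volume correlation function `ρ_m^Λ(x₁,…,x_m)`. -/
def corrFn (d : ℕ) (g : Zd d → ℝ) (z : ℝ) (Λ : Finset (Zd d)) (m : ℕ)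
    (x : Fin m → Zd d) : ℝ :=
  (partitionFn d g z Λ)⁻¹ *
    ∑' n : ℕ, (z ^ (m + n) / (Nat.factorial n)) *
      ∑ y : Fin n → Λ, boltz d g (m + n) (Fin.append x (fun i => (y i).1))

/-- All ways of splitting a list into a subsequence together with the complementary
subsequence. -/
def splits {α : Type*} : List α → List (List α × List α)
  | [] => [([], [])]
  | a :: l => ((splits l).map fun p => (a :: p.1, p.2)) ++ ((splits l).map fun p => (p.1, a :: p.2))

theorem splits_length {α : Type*} : ∀ (Y : List α), ∀ p ∈ splits Y,
    p.1.length + p.2.length = Y.length := by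
  intro Y
  induction Y with
  | nil => simp [splits]
  | cons a l ih =>
    intro p hp
    simp only [splits, List.mem_append, List.mem_map] at hp
    rcases hp with ⟨q, hq, rfl⟩ | ⟨q, hq, rfl⟩ <;> have := ih q hq <;> simp <;> omega

/-- The functions `φ̃_X(Y)` defined by the recurrence
`φ̃_X(Y) = ∏_{i=2}^m (1 + g(x_i - x₁)) ∑_{S ⊆ Y} (∏_{y_j ∈ S} g(y_j - x₁)) φ̃_{(x₂,…,x_m,S)}(Y∖S)`
with `φ̃_∅(Y) = 1` if `Y = ∅` and `0` otherwise. -/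
def phiTilde (d : ℕ) (g : Zd d → ℝ) : List (Zd d) → List (Zd d) → ℝ
  | [], Y => if Y = [] then 1 else 0
  | x₁ :: X', Y =>
    (X'.map fun x => 1 + g (x - x₁)).prod *
      ((splits Y).attach.map fun p =>
        (p.1.1.map fun y => g (y - x₁)).prod * phiTilde d g (X' ++ p.1.1) p.1.2).sum
termination_by X Y => X.length + 2 * Y.length
decreasing_by
  have h := splits_length Y p.1 p.2
  simp only [List.length_append, List.length_cons]
  omega

/-- The convolution product on sequences of functions (viewed as functions on finite
sequences): `(χ¹ * χ²)(X) = ∑_{Y ⊆ X} χ¹(Y) χ²(X∖Y)`. -/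
def convA (d : ℕ) (χ₁ χ₂ : List (Zd d) → ℝ) : List (Zd d) → ℝ :=
  fun X => ((splits X).map fun p => χ₁ p.1 * χ₂ p.2).sum

/-- The unit `𝟏` of the convolution algebra. -/
def oneA (d : ℕ) : List (Zd d) → ℝ := fun X => if X = [] then 1 else 0

/-- The Boltzmann factors as a function on finite sequences:
`ψ(x₁,…,x_m) = ∏_{1 ≤ i < j ≤ m} (1 + g(x_i - x_j))`. -/
def boltzL (d : ℕ) (g : Zd d → ℝ) (X : List (Zd d)) : ℝ :=
  ∏ p ∈ Finset.univ.filter (fun p : Fin X.length × Fin X.length => p.1 < p.2),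
    (1 + g (X.get p.1 - X.get p.2))

/-- An element `χ` of the algebra `𝒜` is a sequence of *bounded* functions. -/
def BoundedA (d : ℕ) (χ : List (Zd d) → ℝ) : Prop :=
  ∀ m : ℕ, ∃ M : ℝ, ∀ X : List (Zd d), X.length = m → |χ X| ≤ M

end

open Filter Topology

namespace S7

open List Real

variable {d : ℕ}

noncomputable def rowS (g : Zd d → ℝ) (x : Zd d) (L : List (Zd d)) : ℝ :=
  (L.map fun z => |g (z - x)|).sum

noncomputable def sPair (g : Zd d → ℝ) : List (Zd d) → ℝ
  | [] => 0
  | x :: L => rowS g x L + sPair g L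

noncomputable def uFn (g : Zd d → ℝ) (X : List (Zd d)) : ℝ :=
  if X.Nodup then Real.exp (sPair g X) else 0

noncomputable def wS (g : Zd d → ℝ) (x₁ : Zd d) (S : List (Zd d)) : ℝ :=
  (S.map fun s => |g (s - x₁)|).prod

noncomputable def KK : ℝ := Real.exp 2
noncomputable def qq : ℝ := Real.exp 20

noncomputable def AA (r n : ℕ) : ℝ :=
  ∑ k ∈ Finset.range (n + 1),
    (n.choose k : ℝ) * (2 * KK) ^ k * ((r + (n - k)).factorial : ℝ)

lemma KK_pos : (0:ℝ) < KK := Real.exp_pos _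
lemma KK_nonneg : (0:ℝ) ≤ KK := KK_pos.le
lemma qq_pos : (0:ℝ) < qq := Real.exp_pos _
lemma qq_nonneg : (0:ℝ) ≤ qq := qq_pos.le

lemma rowS_nonneg (g : Zd d → ℝ) (x : Zd d) (L : List (Zd d)) : 0 ≤ rowS g x L := by
  apply List.sum_nonneg
  intro a ha
  simp only [List.mem_map] at ha
  obtain ⟨z, _, rfl⟩ := ha
  exact abs_nonneg _

lemma sPair_nonneg (g : Zd d → ℝ) : ∀ L : List (Zd d), 0 ≤ sPair g L
  | [] => le_refl 0
  | x :: L => by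
      rw [sPair]
      exact add_nonneg (rowS_nonneg g x L) (sPair_nonneg g L)

lemma uFn_nonneg (g : Zd d → ℝ) (X : List (Zd d)) : 0 ≤ uFn g X := by
  unfold uFn
  split
  · exact (Real.exp_pos _).le
  · exact le_refl 0

lemma wS_nonneg (g : Zd d → ℝ) (x₁ : Zd d) (S : List (Zd d)) : 0 ≤ wS g x₁ S := by
  apply List.prod_nonneg
  intro a ha
  simp only [List.mem_map] at ha
  obtain ⟨z, _, rfl⟩ := ha
  exact abs_nonneg _

@[simp] lemma wS_nil (g : Zd d → ℝ) (x₁ : Zd d) : wS g x₁ [] = 1 := rfl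

lemma wS_cons (g : Zd d → ℝ) (x₁ a : Zd d) (S : List (Zd d)) :
    wS g x₁ (a :: S) = |g (a - x₁)| * wS g x₁ S := by
  simp [wS]

lemma AA_nonneg (r n : ℕ) : 0 ≤ AA r n := by
  apply Finset.sum_nonneg
  intro k _
  have h2K : (0:ℝ) ≤ 2 * KK := by have := KK_nonneg; linarith
  apply mul_nonneg (mul_nonneg (by positivity) (pow_nonneg h2K k)) (by positivity)

lemma AA_zero (r : ℕ) : AA r 0 = (r.factorial : ℝ) := by
  simp [AA]

lemma AA_succ (r n : ℕ) : AA r (n + 1) = 2 * KK * AA r n + AA (r + 1) n := by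
  have e1 : AA r (n+1)
      = (∑ i ∈ Finset.range (n+1),
          (((n+1).choose (i+1) : ℝ) * (2*KK)^(i+1) * ((r + (n - i)).factorial : ℝ)))
        + ((r + n + 1).factorial : ℝ) := by
    rw [AA, Finset.sum_range_succ' _ (n+1)]
    congr 1
    · apply Finset.sum_congr rfl; intro i hi
      have h1 : n + 1 - (i+1) = n - i := by omega
      rw [h1]
    · have h2 : r + (n + 1 - 0) = r + n + 1 := by omega
      simp only [Nat.choose_zero_right, Nat.cast_one, pow_zero, one_mul, mul_one, h2]
  have e2 : AA (r+1) n
      = (∑ i ∈ Finset.range n,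
          ((n.choose (i+1) : ℝ) * (2*KK)^(i+1) * ((r + (n - i)).factorial : ℝ)))
        + ((r + n + 1).factorial : ℝ) := by
    rw [AA, Finset.sum_range_succ' _ n]
    congr 1
    · apply Finset.sum_congr rfl; intro i hi
      have h1 : (r+1) + (n - (i+1)) = r + (n - i) := by
        have := Finset.mem_range.mp hi; omega
      rw [h1]
    · have h2 : (r+1) + (n - 0) = r + n + 1 := by omega
      simp only [Nat.choose_zero_right, Nat.cast_one, pow_zero, one_mul, mul_one, h2]
  have e3 : ∑ i ∈ Finset.range (n+1),
        ((n.choose (i+1) : ℝ) * (2*KK)^(i+1) * ((r + (n - i)).factorial : ℝ))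
      = ∑ i ∈ Finset.range n,
        ((n.choose (i+1) : ℝ) * (2*KK)^(i+1) * ((r + (n - i)).factorial : ℝ)) := by
    rw [Finset.sum_range_succ]
    simp [Nat.choose_succ_self]
  have key : ∀ i ∈ Finset.range (n+1),
      (((n+1).choose (i+1) : ℝ) * (2*KK)^(i+1) * ((r + (n - i)).factorial : ℝ))
      = 2*KK * ((n.choose i : ℝ) * (2*KK)^i * ((r + (n - i)).factorial : ℝ))
        + (n.choose (i+1) : ℝ) * (2*KK)^(i+1) * ((r + (n - i)).factorial : ℝ) := by
    intro i _
    rw [Nat.choose_succ_succ]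
    push_cast; ring
  rw [e1, Finset.sum_congr rfl key, Finset.sum_add_distrib, ← Finset.mul_sum, e3]
  rw [show AA r n = ∑ k ∈ Finset.range (n + 1),
    (n.choose k : ℝ) * (2 * KK) ^ k * ((r + (n - k)).factorial : ℝ) from rfl, e2]
  ring

lemma AA_le (r n : ℕ) : AA r n ≤ ((r+n).factorial : ℝ) * Real.exp (2*KK) := by
  have h2K : (0:ℝ) ≤ 2 * KK := by
    have := KK_nonneg; linarith
  calc AA r n ≤ ∑ k ∈ Finset.range (n+1),
        ((r+n).factorial : ℝ) * ((2*KK)^k / (k.factorial : ℝ)) := by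
        apply Finset.sum_le_sum
        intro k hk
        have hkn : k ≤ n := Nat.lt_succ_iff.mp (Finset.mem_range.mp hk)
        have hnat : n.choose k * (r + (n - k)).factorial * k.factorial ≤ (r+n).factorial := by
          have h1 : n.choose k ≤ (r+n).choose k := Nat.choose_le_choose k (by omega)
          have h2 : r + (n - k) = (r + n) - k := by omega
          calc n.choose k * (r + (n - k)).factorial * k.factorial
              ≤ (r+n).choose k * (r + (n - k)).factorial * k.factorial := by
                apply Nat.mul_le_mul_right
                exact Nat.mul_le_mul_right _ h1
            _ = (r+n).choose k * k.factorial * ((r+n) - k).factorial := by rw [h2]; ring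
            _ = (r+n).factorial := Nat.choose_mul_factorial_mul_factorial (by omega)
        have hkpos : (0:ℝ) < (k.factorial : ℝ) := by positivity
        have target : (n.choose k : ℝ) * (2*KK)^k * ((r + (n - k)).factorial : ℝ) * (k.factorial:ℝ)
            ≤ (2*KK)^k * ((r+n).factorial : ℝ) := by
          calc (n.choose k : ℝ) * (2*KK)^k * ((r + (n - k)).factorial : ℝ) * (k.factorial:ℝ)
              = ((n.choose k * (r + (n - k)).factorial * k.factorial : ℕ) : ℝ) * (2*KK)^k := by
                push_cast; ring
            _ ≤ (((r+n).factorial : ℕ) : ℝ) * (2*KK)^k := by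
                apply mul_le_mul_of_nonneg_right _ (pow_nonneg h2K k)
                exact_mod_cast hnat
            _ = (2*KK)^k * ((r+n).factorial : ℝ) := by ring
        calc (n.choose k : ℝ) * (2*KK)^k * ((r + (n - k)).factorial : ℝ)
            = ((n.choose k : ℝ) * (2*KK)^k * ((r + (n - k)).factorial:ℝ) * (k.factorial:ℝ))
              / (k.factorial:ℝ) := by field_simp
          _ ≤ ((2*KK)^k * ((r+n).factorial : ℝ)) / (k.factorial:ℝ) :=
              (div_le_div_iff_of_pos_right hkpos).mpr target
          _ = ((r+n).factorial : ℝ) * ((2*KK)^k / (k.factorial:ℝ)) := by ring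
    _ = ((r+n).factorial : ℝ) * ∑ k ∈ Finset.range (n+1), ((2*KK)^k / (k.factorial : ℝ)) := by
        rw [Finset.mul_sum]
    _ ≤ ((r+n).factorial : ℝ) * Real.exp (2*KK) := by
        apply mul_le_mul_of_nonneg_left _ (by positivity)
        exact Real.sum_le_exp_of_nonneg h2K (n+1)

section adm
variable {g : Zd d → ℝ} {c : ℝ}

lemma g_abs_zero (hg : Admissible d g c) : |g 0| = 1 := by
  rw [hg.1]; norm_num

lemma sumF_le (hg : Admissible d g c) (hc1 : c ≤ 1) (F : Finset (Zd d)) (x : Zd d) :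
    ∑ z ∈ F, |g (z - x)| ≤ 2 := by
  classical
  have hinj : Function.Injective (fun z : Zd d => z - x) := by
    intro a b h
    simpa using congrArg (· + x) h
  have h1 : ∑ w ∈ F.image (fun z => z - x), |g w| = ∑ z ∈ F, |g (z - x)| :=
    Finset.sum_image (fun a _ b _ h => hinj h)
  rw [← h1]
  set F' := F.image (fun z => z - x) with hF'
  have h2 : ∑ w ∈ F', |g w| ≤ ∑ w ∈ insert 0 F', |g w| :=
    Finset.sum_le_sum_of_subset_of_nonneg (Finset.subset_insert _ _)
      (fun i _ _ => abs_nonneg _)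
  refine h2.trans ?_
  rw [← Finset.add_sum_erase _ _ (Finset.mem_insert_self 0 F')]
  have h3 : ∑ w ∈ (insert 0 F').erase 0, |g w| ≤ 1 := by
    set s := (insert 0 F').erase 0 with hs
    have hmem : ∀ w ∈ s, w ≠ 0 := fun w hw => Finset.ne_of_mem_erase hw
    set e : {w // w ∈ s} → {x : Zd d // x ≠ 0} := fun w => ⟨w.1, hmem w.1 w.2⟩ with he
    have hinj2 : Function.Injective e := by
      intro a b h
      apply Subtype.ext
      exact congrArg (Subtype.val : {x : Zd d // x ≠ 0} → Zd d) h
    have h4 : ∑ u ∈ s.attach.image e, |g u.1| = ∑ w ∈ s, |g w| := by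
      rw [Finset.sum_image (fun a _ b _ h => hinj2 h)]
      exact Finset.sum_attach s (fun w => |g w|)
    rw [← h4]
    calc ∑ u ∈ s.attach.image e, |g u.1|
        ≤ ∑' u : {x : Zd d // x ≠ 0}, |g u.1| :=
          Summable.sum_le_tsum _ (fun i _ => abs_nonneg _) hg.2.2.1
      _ ≤ c := hg.2.2.2
      _ ≤ 1 := hc1
  have h5 : |g 0| = 1 := g_abs_zero hg
  linarith

lemma rowS_le (hg : Admissible d g c) (hc1 : c ≤ 1) {L : List (Zd d)} (hL : L.Nodup)
    (x : Zd d) : rowS g x L ≤ 2 := by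
  unfold rowS
  rw [← List.sum_toFinset _ hL]
  exact sumF_le hg hc1 _ x

lemma backRow_le (hg : Admissible d g c) (hc1 : c ≤ 1) {L : List (Zd d)} (hL : L.Nodup)
    (a : Zd d) : (L.map fun z => |g (a - z)|).sum ≤ 2 := by
  have heq : (L.map fun z => |g (a - z)|) = (L.map fun z => |g (z - a)|) := by
    apply List.map_congr_left
    intro z _
    rw [hg.2.1 (a - z), neg_sub]
  rw [heq]
  exact rowS_le hg hc1 hL a

lemma sPair_append (g : Zd d → ℝ) (a : Zd d) :
    ∀ L : List (Zd d), sPair g (L ++ [a]) = sPair g L + (L.map fun z => |g (a - z)|).sum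
  | [] => by simp [sPair, rowS]
  | x :: L => by
      show sPair g (x :: (L ++ [a])) = _
      rw [sPair, sPair, sPair_append g a L]
      unfold rowS
      rw [List.map_append, List.sum_append]
      simp
      ring

lemma sPair_le (hg : Admissible d g c) (hc1 : c ≤ 1) :
    ∀ {L : List (Zd d)}, L.Nodup → sPair g L ≤ 2 * L.length
  | [], _ => by simp [sPair]
  | x :: L, h => by
      have h1 := (List.nodup_cons.mp h).2
      have h2 := rowS_le hg hc1 h1 x
      have h3 := sPair_le hg hc1 h1
      rw [sPair]
      simp only [List.length_cons]
      push_cast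
      linarith

lemma uFn_append_le (hg : Admissible d g c) (hc1 : c ≤ 1) (X' : List (Zd d)) (a : Zd d) :
    uFn g (X' ++ [a]) ≤ KK * uFn g X' := by
  by_cases h : (X' ++ [a]).Nodup
  · have hX' : X'.Nodup := (List.nodup_append.mp h).1
    rw [uFn, if_pos h, uFn, if_pos hX', sPair_append]
    rw [Real.exp_add]
    rw [mul_comm]
    apply mul_le_mul_of_nonneg_right _ (Real.exp_pos _).le
    rw [KK]
    exact Real.exp_le_exp.mpr (backRow_le hg hc1 hX' a)
  · rw [uFn, if_neg h]
    exact mul_nonneg KK_nonneg (uFn_nonneg g X')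

lemma U5 (hg : Admissible d g c) (hc1 : c ≤ 1) (x₁ : Zd d) (X' : List (Zd d))
    (G : Finset (Zd d)) :
    ∑ a ∈ G, |g (a - x₁)| * uFn g (X' ++ [a]) ≤ 2 * KK * uFn g X' := by
  calc ∑ a ∈ G, |g (a - x₁)| * uFn g (X' ++ [a])
      ≤ ∑ a ∈ G, |g (a - x₁)| * (KK * uFn g X') :=
        Finset.sum_le_sum (fun a _ =>
          mul_le_mul_of_nonneg_left (uFn_append_le hg hc1 X' a) (abs_nonneg _))
    _ = (∑ a ∈ G, |g (a - x₁)|) * (KK * uFn g X') := by rw [← Finset.sum_mul]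
    _ ≤ 2 * (KK * uFn g X') :=
        mul_le_mul_of_nonneg_right (sumF_le hg hc1 G x₁)
          (mul_nonneg KK_nonneg (uFn_nonneg g X'))
    _ = 2 * KK * uFn g X' := by ring

end adm

lemma abs_list_sum : ∀ l : List ℝ, |l.sum| ≤ (l.map abs).sum
  | [] => by simp
  | a :: l => by
      rw [List.sum_cons, List.map_cons, List.sum_cons]
      exact (abs_add_le _ _).trans (add_le_add le_rfl (abs_list_sum l))

lemma abs_list_prod : ∀ l : List ℝ, |l.prod| = (l.map abs).prod
  | [] => by simp
  | a :: l => by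
      rw [List.prod_cons, List.map_cons, List.prod_cons, abs_mul, abs_list_prod l]

lemma prod_abs_le_exp (g : Zd d → ℝ) (x₁ : Zd d) :
    ∀ L : List (Zd d), (L.map fun x => |1 + g (x - x₁)|).prod ≤ Real.exp (rowS g x₁ L)
  | [] => by simp [rowS]
  | x :: L => by
      rw [List.map_cons, List.prod_cons]
      have h0 : rowS g x₁ (x :: L) = |g (x - x₁)| + rowS g x₁ L := by
        simp [rowS]
      rw [h0, Real.exp_add]
      apply mul_le_mul
      · calc |1 + g (x - x₁)| ≤ |(1:ℝ)| + |g (x - x₁)| := abs_add_le _ _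
          _ = |g (x - x₁)| + 1 := by rw [abs_one]; ring
          _ ≤ Real.exp (|g (x - x₁)|) := Real.add_one_le_exp _
      · exact prod_abs_le_exp g x₁ L
      · apply List.prod_nonneg
        intro a ha
        simp only [List.mem_map] at ha
        obtain ⟨z, _, rfl⟩ := ha
        exact abs_nonneg _
      · exact (Real.exp_pos _).le

lemma phiTilde_nil (g : Zd d → ℝ) (Y : List (Zd d)) :
    phiTilde d g [] Y = if Y = [] then 1 else 0 := by
  rw [phiTilde]

lemma phiTilde_cons (g : Zd d → ℝ) (x₁ : Zd d) (X' Y : List (Zd d)) :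
    phiTilde d g (x₁ :: X') Y =
    (X'.map fun x => 1 + g (x - x₁)).prod *
      ((splits Y).map fun p =>
        (p.1.map fun y => g (y - x₁)).prod * phiTilde d g (X' ++ p.1) p.2).sum := by
  rw [phiTilde]
  congr 1
  conv_rhs => rw [← List.attach_map_subtype_val (splits Y), List.map_map]
  rfl

lemma phiTilde_abs_cons_le (g : Zd d → ℝ) (x₁ : Zd d) (X' Y : List (Zd d)) :
    |phiTilde d g (x₁ :: X') Y| ≤
    (X'.map fun x => |1 + g (x - x₁)|).prod *
      ((splits Y).map fun p => wS g x₁ p.1 * |phiTilde d g (X' ++ p.1) p.2|).sum := by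
  rw [phiTilde_cons, abs_mul]
  have h1 : |(X'.map fun x => 1 + g (x - x₁)).prod| = (X'.map fun x => |1 + g (x - x₁)|).prod := by
    rw [abs_list_prod, List.map_map]
    rfl
  rw [h1]
  apply mul_le_mul_of_nonneg_left _ (by
    apply List.prod_nonneg
    intro a ha
    simp only [List.mem_map] at ha
    obtain ⟨z, _, rfl⟩ := ha
    exact abs_nonneg _)
  refine (abs_list_sum _).trans_eq ?_
  rw [List.map_map]
  apply congrArg
  apply List.map_congr_left
  intro p _
  simp only [Function.comp_apply, abs_mul, wS]
  rw [abs_list_prod, List.map_map]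
  rfl
lemma sum_pi_succ {M : Type*} [AddCommMonoid M] {α : Type*} [Fintype α] (n : ℕ)
    (F : (Fin (n+1) → α) → M) :
    ∑ y : Fin (n+1) → α, F y = ∑ a : α, ∑ y : Fin n → α, F (Fin.cons a y) := by
  rw [← (Fin.consEquiv (fun _ : Fin (n+1) => α)).sum_comp F]
  rw [Fintype.sum_prod_type]
  rfl

lemma reverse_ofFn {α : Type*} : ∀ {n : ℕ} (f : Fin n → α),
    (List.ofFn f).reverse = List.ofFn (fun i => f i.rev) := by
  intro n
  induction n with
  | zero => intro f; simp
  | succ n ih =>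
    intro f
    have h2 : ∀ i : Fin n, f i.succ.rev = f i.rev.castSucc := fun i => by
      rw [Fin.rev_succ]
    have h0 : (0 : Fin (n+1)).rev = Fin.last n := by
      rw [← Fin.rev_last, Fin.rev_rev]
    rw [List.ofFn_succ (f := fun i => f i.rev)]
    rw [List.ofFn_succ' (f := f), List.concat_eq_append, List.reverse_concat', ih]
    rw [h0]
    exact congrArg (List.cons (f (Fin.last n)))
      (congrArg List.ofFn (funext fun i => (h2 i).symm))

noncomputable def inQ (g : Zd d → ℝ) (x₁ : Zd d) (X' R : List (Zd d)) (n : ℕ)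
    (G : Finset (Zd d)) : ℝ :=
  ∑ y : Fin n → {z // z ∈ G},
    ((splits (List.ofFn fun i => ((y i : Zd d)))).map
      (fun p => wS g x₁ p.1 * |phiTilde d g (X' ++ p.1) (R ++ p.2)|)).sum

noncomputable def QQ (g : Zd d → ℝ) (x₁ : Zd d) (X' : List (Zd d)) (r n : ℕ)
    (G : Finset (Zd d)) : ℝ :=
  ∑ t : Fin r → {z // z ∈ G},
    inQ g x₁ X' ((List.ofFn fun i => ((t i : Zd d))).reverse) n G

lemma inQ_nonneg (g : Zd d → ℝ) (x₁ : Zd d) (X' R : List (Zd d)) (n : ℕ)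
    (G : Finset (Zd d)) : 0 ≤ inQ g x₁ X' R n G := by
  apply Finset.sum_nonneg
  intro y _
  apply List.sum_nonneg
  intro a ha
  simp only [List.mem_map] at ha
  obtain ⟨p, _, rfl⟩ := ha
  exact mul_nonneg (wS_nonneg _ _ _) (abs_nonneg _)

lemma QQ_nonneg (g : Zd d → ℝ) (x₁ : Zd d) (X' : List (Zd d)) (r n : ℕ)
    (G : Finset (Zd d)) : 0 ≤ QQ g x₁ X' r n G :=
  Finset.sum_nonneg (fun t _ => inQ_nonneg _ _ _ _ _ _)

lemma inQ_zero (g : Zd d → ℝ) (x₁ : Zd d) (X' R : List (Zd d)) (G : Finset (Zd d)) :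
    inQ g x₁ X' R 0 G = |phiTilde d g X' R| := by
  unfold inQ
  haveI : Subsingleton (Fin 0 → {z // z ∈ G}) := ⟨fun a b => funext fun i => i.elim0⟩
  rw [Fintype.sum_subsingleton _ (fun i : Fin 0 => i.elim0)]
  simp [splits]

lemma QQ_zero_right (g : Zd d → ℝ) (x₁ : Zd d) (X' : List (Zd d)) (r : ℕ)
    (G : Finset (Zd d)) :
    QQ g x₁ X' r 0 G
      = ∑ t : Fin r → {z // z ∈ G},
          |phiTilde d g X' (List.ofFn fun i => ((t i.rev : Zd d)))| := by
  unfold QQ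
  refine Finset.sum_congr rfl (fun t _ => ?_)
  rw [inQ_zero, reverse_ofFn]

lemma QQ_zero_left (g : Zd d → ℝ) (x₁ : Zd d) (X' : List (Zd d)) (n : ℕ)
    (G : Finset (Zd d)) :
    QQ g x₁ X' 0 n G = inQ g x₁ X' [] n G := by
  unfold QQ
  haveI : Subsingleton (Fin 0 → {z // z ∈ G}) := ⟨fun a b => funext fun i => i.elim0⟩
  rw [Fintype.sum_subsingleton _ (fun i : Fin 0 => i.elim0)]
  simp

lemma inQ_succ (g : Zd d → ℝ) (x₁ : Zd d) (X' R : List (Zd d)) (n : ℕ)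
    (G : Finset (Zd d)) :
    inQ g x₁ X' R (n+1) G
      = ∑ a : {z // z ∈ G},
          (|g ((a : Zd d) - x₁)| * inQ g x₁ (X' ++ [(a : Zd d)]) R n G
            + inQ g x₁ X' (R ++ [(a : Zd d)]) n G) := by
  unfold inQ
  rw [sum_pi_succ]
  refine Finset.sum_congr rfl (fun a _ => ?_)
  rw [Finset.mul_sum, ← Finset.sum_add_distrib]
  refine Finset.sum_congr rfl (fun y _ => ?_)
  have hofFn : (List.ofFn fun i => ((Fin.cons (α := fun _ => {z // z ∈ G}) a y i : {z // z ∈ G}) : Zd d))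
      = ((a : Zd d)) :: List.ofFn (fun i => ((y i : Zd d))) := by
    rw [List.ofFn_succ]
    simp
  rw [hofFn]
  show ((splits ((a : Zd d) :: List.ofFn fun i => ((y i : Zd d)))).map _).sum = _
  rw [show splits ((a : Zd d) :: List.ofFn fun i => ((y i : Zd d)))
      = ((splits (List.ofFn fun i => ((y i : Zd d)))).map
          fun p => ((a : Zd d) :: p.1, p.2)) ++
        ((splits (List.ofFn fun i => ((y i : Zd d)))).map
          fun p => (p.1, (a : Zd d) :: p.2)) from rfl]
  rw [List.map_append, List.map_map, List.map_map, List.sum_append]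
  congr 1
  · rw [← List.sum_map_mul_left]
    apply congrArg
    apply List.map_congr_left
    intro p _
    simp only [Function.comp_apply]
    rw [wS_cons, mul_assoc]
    congr 2
    rw [List.append_cons]
  · apply congrArg
    apply List.map_congr_left
    intro p _
    simp only [Function.comp_apply]
    congr 2
    rw [List.append_cons]

lemma QQ_succ (g : Zd d → ℝ) (x₁ : Zd d) (X' : List (Zd d)) (r n : ℕ)
    (G : Finset (Zd d)) :
    QQ g x₁ X' r (n+1) G
      = (∑ a ∈ G, |g (a - x₁)| * QQ g x₁ (X' ++ [a]) r n G)
        + QQ g x₁ X' (r+1) n G := by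
  have hRt : ∀ (a : {z // z ∈ G}) (t : Fin r → {z // z ∈ G}),
      (List.ofFn fun i => ((Fin.cons (α := fun _ => {z // z ∈ G}) a t i : {z // z ∈ G}) : Zd d)).reverse
        = (List.ofFn fun i => ((t i : Zd d))).reverse ++ [(a : Zd d)] := by
    intro a t
    have h : (List.ofFn fun i => ((Fin.cons (α := fun _ => {z // z ∈ G}) a t i : {z // z ∈ G}) : Zd d))
        = ((a : Zd d)) :: List.ofFn (fun i => ((t i : Zd d))) := by
      rw [List.ofFn_succ]; simp
    rw [h, List.reverse_cons]
  calc QQ g x₁ X' r (n+1) G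
      = ∑ t : Fin r → {z // z ∈ G}, ∑ a : {z // z ∈ G},
          (|g ((a : Zd d) - x₁)|
              * inQ g x₁ (X' ++ [(a : Zd d)])
                  ((List.ofFn fun i => ((t i : Zd d))).reverse) n G
            + inQ g x₁ X'
                ((List.ofFn fun i => ((t i : Zd d))).reverse ++ [(a : Zd d)]) n G) := by
        unfold QQ
        exact Finset.sum_congr rfl (fun t _ => inQ_succ g x₁ X' _ n G)
    _ = ∑ a : {z // z ∈ G}, ∑ t : Fin r → {z // z ∈ G},
          (|g ((a : Zd d) - x₁)|
              * inQ g x₁ (X' ++ [(a : Zd d)])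
                  ((List.ofFn fun i => ((t i : Zd d))).reverse) n G
            + inQ g x₁ X'
                ((List.ofFn fun i => ((t i : Zd d))).reverse ++ [(a : Zd d)]) n G) :=
        Finset.sum_comm
    _ = (∑ a : {z // z ∈ G}, |g ((a : Zd d) - x₁)| * QQ g x₁ (X' ++ [(a : Zd d)]) r n G)
        + ∑ a : {z // z ∈ G}, ∑ t : Fin r → {z // z ∈ G},
            inQ g x₁ X' ((List.ofFn fun i => ((t i : Zd d))).reverse ++ [(a : Zd d)]) n G := by
        rw [← Finset.sum_add_distrib]
        refine Finset.sum_congr rfl (fun a _ => ?_)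
        rw [Finset.sum_add_distrib]
        congr 1
        rw [show QQ g x₁ (X' ++ [(a : Zd d)]) r n G = ∑ t : Fin r → {z // z ∈ G},
          inQ g x₁ (X' ++ [(a : Zd d)])
            ((List.ofFn fun i => ((t i : Zd d))).reverse) n G from rfl,
          Finset.mul_sum]
    _ = (∑ a ∈ G, |g (a - x₁)| * QQ g x₁ (X' ++ [a]) r n G) + QQ g x₁ X' (r+1) n G := by
        congr 1
        · exact Finset.sum_coe_sort G (fun a => |g (a - x₁)| * QQ g x₁ (X' ++ [a]) r n G)
        · unfold QQ
          rw [sum_pi_succ r (fun t : Fin (r+1) → {z // z ∈ G} =>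
            inQ g x₁ X' ((List.ofFn fun i => ((t i : Zd d))).reverse) n G)]
          refine (Finset.sum_congr rfl (fun a _ => ?_)).symm
          refine Finset.sum_congr rfl (fun t _ => ?_)
          rw [hRt]
lemma const_le : KK * Real.exp (2*KK) ≤ qq := by
  have h1 : Real.exp 2 ≤ 9 := by
    have h2 : Real.exp 1 ≤ 2.7182818286 := (Real.exp_one_lt_d9).le
    calc Real.exp 2 = Real.exp 1 * Real.exp 1 := by rw [← Real.exp_add]; norm_num
      _ ≤ 2.7182818286 * 2.7182818286 := by nlinarith [Real.exp_pos 1, (Real.exp_pos 1).le]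
      _ ≤ 9 := by norm_num
  rw [KK, qq, ← Real.exp_add]
  apply Real.exp_le_exp.mpr
  linarith

lemma inner_bound {g : Zd d → ℝ} {c : ℝ} (hg : Admissible d g c) (hc1 : c ≤ 1) (M : ℕ)
    (H : ∀ (Z : List (Zd d)) (N : ℕ), Z.length + 2*N < M → ∀ F : Finset (Fin N → Zd d),
      ∑ y ∈ F, |phiTilde d g Z (List.ofFn y)|
        ≤ (N.factorial : ℝ) * qq ^ (Z.length + N) * uFn g Z) :
    ∀ (n : ℕ) (x₁ : Zd d) (X' : List (Zd d)) (r : ℕ) (G : Finset (Zd d)),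
      X'.length + 2*r + 2*n < M →
      QQ g x₁ X' r n G ≤ uFn g X' * qq ^ (X'.length + r + n) * AA r n := by
  intro n
  induction n with
  | zero =>
    intro x₁ X' r G h
    rw [QQ_zero_right]
    set e : (Fin r → {z // z ∈ G}) → (Fin r → Zd d) := fun t => fun i => ((t i.rev : Zd d))
      with he
    have hinj : ∀ t ∈ (Finset.univ : Finset (Fin r → {z // z ∈ G})), ∀ s ∈ Finset.univ,
        e t = e s → t = s := by
      intro t _ s _ hts
      funext j
      have h1 := congrFun hts j.rev
      simp only [he, Fin.rev_rev] at h1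
      exact Subtype.ext h1
    have hsum : ∑ v ∈ Finset.univ.image e, |phiTilde d g X' (List.ofFn v)|
        = ∑ t : Fin r → {z // z ∈ G},
            |phiTilde d g X' (List.ofFn fun i => ((t i.rev : Zd d)))| :=
      Finset.sum_image hinj
    rw [← hsum]
    have hM : X'.length + 2*r < M := by omega
    calc ∑ v ∈ Finset.univ.image e, |phiTilde d g X' (List.ofFn v)|
        ≤ (r.factorial : ℝ) * qq ^ (X'.length + r) * uFn g X' := H X' r hM _
      _ = uFn g X' * qq ^ (X'.length + r + 0) * AA r 0 := by
          rw [AA_zero, Nat.add_zero]; ring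
  | succ n ihn =>
    intro x₁ X' r G h
    rw [QQ_succ]
    have hC : (0:ℝ) ≤ qq ^ (X'.length + 1 + r + n) * AA r n :=
      mul_nonneg (pow_nonneg qq_nonneg _) (AA_nonneg r n)
    have h1 : ∑ a ∈ G, |g (a - x₁)| * QQ g x₁ (X' ++ [a]) r n G
        ≤ (2 * KK * uFn g X') * (qq ^ (X'.length + 1 + r + n) * AA r n) := by
      calc ∑ a ∈ G, |g (a - x₁)| * QQ g x₁ (X' ++ [a]) r n G
          ≤ ∑ a ∈ G, |g (a - x₁)| *
              (uFn g (X' ++ [a]) * (qq ^ (X'.length + 1 + r + n) * AA r n)) := by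
            apply Finset.sum_le_sum
            intro a _
            apply mul_le_mul_of_nonneg_left _ (abs_nonneg _)
            have hM2 : (X' ++ [a]).length + 2*r + 2*n < M := by
              simp only [List.length_append, List.length_cons, List.length_nil]
              omega
            calc QQ g x₁ (X' ++ [a]) r n G
                ≤ uFn g (X' ++ [a]) * qq ^ ((X' ++ [a]).length + r + n) * AA r n :=
                  ihn x₁ (X' ++ [a]) r G hM2
              _ = uFn g (X' ++ [a]) * (qq ^ (X'.length + 1 + r + n) * AA r n) := by
                  simp only [List.length_append, List.length_cons, List.length_nil]
                  rw [show X'.length + (0 + 1) + r + n = X'.length + 1 + r + n by omega]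
                  ring
        _ = (∑ a ∈ G, |g (a - x₁)| * uFn g (X' ++ [a]))
              * (qq ^ (X'.length + 1 + r + n) * AA r n) := by
            rw [Finset.sum_mul]
            apply Finset.sum_congr rfl
            intro a _
            ring
        _ ≤ (2 * KK * uFn g X') * (qq ^ (X'.length + 1 + r + n) * AA r n) :=
            mul_le_mul_of_nonneg_right (U5 hg hc1 x₁ X' G) hC
    have h2 : QQ g x₁ X' (r+1) n G
        ≤ uFn g X' * (qq ^ (X'.length + 1 + r + n) * AA (r+1) n) := by
      have hM3 : X'.length + 2*(r+1) + 2*n < M := by omega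
      calc QQ g x₁ X' (r+1) n G
          ≤ uFn g X' * qq ^ (X'.length + (r+1) + n) * AA (r+1) n := ihn x₁ X' (r+1) G hM3
        _ = uFn g X' * (qq ^ (X'.length + 1 + r + n) * AA (r+1) n) := by
            rw [show X'.length + (r+1) + n = X'.length + 1 + r + n by omega]
            ring
    calc (∑ a ∈ G, |g (a - x₁)| * QQ g x₁ (X' ++ [a]) r n G) + QQ g x₁ X' (r+1) n G
        ≤ (2 * KK * uFn g X') * (qq ^ (X'.length + 1 + r + n) * AA r n)
          + uFn g X' * (qq ^ (X'.length + 1 + r + n) * AA (r+1) n) := add_le_add h1 h2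
      _ = uFn g X' * qq ^ (X'.length + 1 + r + n) * (2 * KK * AA r n + AA (r+1) n) := by ring
      _ = uFn g X' * qq ^ (X'.length + r + (n+1)) * AA r (n+1) := by
          rw [AA_succ, show X'.length + 1 + r + n = X'.length + r + (n+1) by omega]

lemma main_bound {g : Zd d → ℝ} {c : ℝ} (hg : Admissible d g c) (hc1 : c ≤ 1) :
    ∀ (M : ℕ) (X : List (Zd d)) (n : ℕ), X.length + 2*n ≤ M →
      ∀ F : Finset (Fin n → Zd d),
        ∑ y ∈ F, |phiTilde d g X (List.ofFn y)|
          ≤ (n.factorial : ℝ) * qq ^ (X.length + n) * uFn g X := by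
  intro M
  induction M using Nat.strong_induction_on with
  | _ M ih =>
    intro X n hn F
    have hRHS0 : (0:ℝ) ≤ (n.factorial : ℝ) * qq ^ (X.length + n) * uFn g X :=
      mul_nonneg (mul_nonneg (by positivity) (pow_nonneg qq_nonneg _)) (uFn_nonneg g X)
    cases X with
    | nil =>
      rcases Nat.eq_zero_or_pos n with hn0 | hn0
      · subst hn0
        have hterm : ∀ y : Fin 0 → Zd d, |phiTilde d g [] (List.ofFn y)| = 1 := by
          intro y
          rw [phiTilde_nil]
          simp
        have hRHS1 : (Nat.factorial 0 : ℝ) * qq ^ (List.length ([] : List (Zd d)) + 0)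
            * uFn g [] = 1 := by
          simp [uFn, sPair]
        rw [hRHS1]
        calc ∑ y ∈ F, |phiTilde d g [] (List.ofFn y)|
            = ∑ _y ∈ F, (1:ℝ) := Finset.sum_congr rfl (fun y _ => hterm y)
          _ = (F.card : ℝ) := by simp
          _ ≤ 1 := by
              haveI : Subsingleton (Fin 0 → Zd d) := ⟨fun a b => funext fun i => i.elim0⟩
              exact_mod_cast Finset.card_le_one.mpr (fun a _ b _ => Subsingleton.elim a b)
      · have hterm : ∀ y : Fin n → Zd d, |phiTilde d g [] (List.ofFn y)| = 0 := by
          intro y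
          rw [phiTilde_nil, if_neg, abs_zero]
          intro hcon
          have hlen := List.length_ofFn (f := y)
          rw [hcon] at hlen
          simp at hlen
          omega
        calc ∑ y ∈ F, |phiTilde d g [] (List.ofFn y)|
            = ∑ _y ∈ F, (0:ℝ) := Finset.sum_congr rfl (fun y _ => hterm y)
          _ = 0 := by simp
          _ ≤ _ := hRHS0
    | cons x₁ X' =>
      classical
      set G : Finset (Zd d) := F.biUnion (fun y => Finset.image y Finset.univ) with hG
      set e : (Fin n → {z // z ∈ G}) → (Fin n → Zd d) := fun v => fun i => ((v i : Zd d))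
        with he
      have hFsub : F ⊆ Finset.univ.image e := by
        intro y hy
        apply Finset.mem_image.mpr
        refine ⟨fun i => ⟨y i, ?_⟩, Finset.mem_univ _, rfl⟩
        exact Finset.mem_biUnion.mpr ⟨y, hy, Finset.mem_image_of_mem _ (Finset.mem_univ i)⟩
      have hinj : ∀ t ∈ (Finset.univ : Finset (Fin n → {z // z ∈ G})), ∀ s ∈ Finset.univ,
          e t = e s → t = s := by
        intro t _ s _ hts
        funext i
        exact Subtype.ext (congrFun hts i)
      have step1 : ∑ y ∈ F, |phiTilde d g (x₁ :: X') (List.ofFn y)|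
          ≤ ∑ v : Fin n → {z // z ∈ G}, |phiTilde d g (x₁ :: X') (List.ofFn (e v))| := by
        calc ∑ y ∈ F, |phiTilde d g (x₁ :: X') (List.ofFn y)|
            ≤ ∑ y ∈ Finset.univ.image e, |phiTilde d g (x₁ :: X') (List.ofFn y)| :=
              Finset.sum_le_sum_of_subset_of_nonneg hFsub (fun _ _ _ => abs_nonneg _)
          _ = ∑ v : Fin n → {z // z ∈ G}, |phiTilde d g (x₁ :: X') (List.ofFn (e v))| :=
              Finset.sum_image hinj
      set P : ℝ := (X'.map fun x => |1 + g (x - x₁)|).prod with hP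
      have hPnn : 0 ≤ P := by
        rw [hP]
        apply List.prod_nonneg
        intro a ha
        simp only [List.mem_map] at ha
        obtain ⟨z, _, rfl⟩ := ha
        exact abs_nonneg _
      have step2 : ∑ v : Fin n → {z // z ∈ G}, |phiTilde d g (x₁ :: X') (List.ofFn (e v))|
          ≤ P * inQ g x₁ X' [] n G := by
        have hinQ : inQ g x₁ X' [] n G = ∑ v : Fin n → {z // z ∈ G},
            ((splits (List.ofFn fun i => ((v i : Zd d)))).map
              (fun p => wS g x₁ p.1 * |phiTilde d g (X' ++ p.1) p.2|)).sum := by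
          unfold inQ
          simp only [List.nil_append]
        rw [hinQ, Finset.mul_sum]
        apply Finset.sum_le_sum
        intro v _
        exact phiTilde_abs_cons_le g x₁ X' _
      have hQle : inQ g x₁ X' [] n G ≤ uFn g X' * qq ^ (X'.length + 0 + n) * AA 0 n := by
        rw [← QQ_zero_left]
        apply inner_bound hg hc1 M ?_ n x₁ X' 0 G ?_
        · intro Z N hZN F'
          exact ih (Z.length + 2*N) hZN Z N le_rfl F'
        · have : (x₁ :: X').length = X'.length + 1 := by simp
          omega
      have hcomb : ∑ y ∈ F, |phiTilde d g (x₁ :: X') (List.ofFn y)|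
          ≤ P * inQ g x₁ X' [] n G := step1.trans step2
      by_cases hnd : (x₁ :: X').Nodup
      · have hx1 : x₁ ∉ X' := (List.nodup_cons.mp hnd).1
        have hX'nd : X'.Nodup := (List.nodup_cons.mp hnd).2
        have hPle : P ≤ KK := by
          rw [hP, KK]
          refine (prod_abs_le_exp g x₁ X').trans ?_
          exact Real.exp_le_exp.mpr (rowS_le hg hc1 hX'nd x₁)
        have hules : uFn g X' ≤ uFn g (x₁ :: X') := by
          rw [uFn, if_pos hX'nd, uFn, if_pos hnd]
          apply Real.exp_le_exp.mpr
          rw [sPair]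
          have := rowS_nonneg g x₁ X'
          linarith
        have hAA : AA 0 n ≤ (n.factorial : ℝ) * Real.exp (2*KK) := by
          have h := AA_le 0 n
          rwa [Nat.zero_add] at h
        have hunn := uFn_nonneg g X'
        have hqnn : (0:ℝ) ≤ qq ^ (X'.length + n) := pow_nonneg qq_nonneg _
        calc ∑ y ∈ F, |phiTilde d g (x₁ :: X') (List.ofFn y)|
            ≤ P * inQ g x₁ X' [] n G := hcomb
          _ ≤ KK * (uFn g X' * qq ^ (X'.length + 0 + n) * AA 0 n) :=
              mul_le_mul hPle hQle (inQ_nonneg _ _ _ _ _ _) KK_nonneg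
          _ = KK * (uFn g X' * qq ^ (X'.length + n) * AA 0 n) := by
              rw [Nat.add_zero]
          _ ≤ KK * (uFn g X' * qq ^ (X'.length + n) * ((n.factorial : ℝ) * Real.exp (2*KK))) := by
              apply mul_le_mul_of_nonneg_left _ KK_nonneg
              exact mul_le_mul_of_nonneg_left hAA (mul_nonneg hunn hqnn)
          _ = (KK * Real.exp (2*KK)) * ((n.factorial : ℝ) * qq ^ (X'.length + n) * uFn g X') := by
              ring
          _ ≤ qq * ((n.factorial : ℝ) * qq ^ (X'.length + n) * uFn g X') := by
              apply mul_le_mul_of_nonneg_right const_le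
              exact mul_nonneg (mul_nonneg (by positivity) hqnn) hunn
          _ = (n.factorial : ℝ) * qq ^ (X'.length + 1 + n) * uFn g X' := by
              rw [show X'.length + 1 + n = X'.length + n + 1 by omega, pow_succ]
              ring
          _ ≤ (n.factorial : ℝ) * qq ^ ((x₁ :: X').length + n) * uFn g (x₁ :: X') := by
              rw [show (x₁ :: X').length = X'.length + 1 from rfl]
              exact mul_le_mul_of_nonneg_left hules
                (mul_nonneg (by positivity) (pow_nonneg qq_nonneg _))
      · have hzero : ∑ y ∈ F, |phiTilde d g (x₁ :: X') (List.ofFn y)| ≤ 0 := by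
          by_cases hx : x₁ ∈ X'
          · have hP0 : P = 0 := by
              rw [hP]
              apply List.prod_eq_zero
              apply List.mem_map.mpr
              refine ⟨x₁, hx, ?_⟩
              rw [sub_self, hg.1]
              norm_num
            calc ∑ y ∈ F, |phiTilde d g (x₁ :: X') (List.ofFn y)|
                ≤ P * inQ g x₁ X' [] n G := hcomb
              _ = 0 := by rw [hP0, zero_mul]
          · have hX'nnd : ¬ X'.Nodup := by
              intro hcon
              exact hnd (List.nodup_cons.mpr ⟨hx, hcon⟩)
            have hu0 : uFn g X' = 0 := by rw [uFn, if_neg hX'nnd]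
            have hQ0 : inQ g x₁ X' [] n G ≤ 0 := by
              refine hQle.trans ?_
              rw [hu0, zero_mul, zero_mul]
            calc ∑ y ∈ F, |phiTilde d g (x₁ :: X') (List.ofFn y)|
                ≤ P * inQ g x₁ X' [] n G := hcomb
              _ ≤ P * 0 := mul_le_mul_of_nonneg_left hQ0 hPnn
              _ = 0 := mul_zero P
        exact hzero.trans hRHS0

end S7

open S7 in
/-- For every `0 < c < 1` there is `q₁ > 0` such that for every `g`
admissible with constant `c`, all `m ≥ 1`, `n ≥ 0`, and every `(x₁,…,x_m)`,
`∑_{y₁,…,y_n} |φ̃_{(x₁,…,x_m)}(y₁,…,y_n)| ≤ n! q₁^{m+n}`. -/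
theorem statement7 (d : ℕ) (hd : 1 ≤ d) (c : ℝ) (hc0 : 0 < c) (hc1 : c < 1) :
    ∃ q₁ : ℝ, 0 < q₁ ∧
      ∀ g : Zd d → ℝ, Admissible d g c → ∀ m : ℕ, 1 ≤ m → ∀ n : ℕ,
      ∀ x : Fin m → Zd d,
        Summable (fun y : Fin n → Zd d => |phiTilde d g (List.ofFn x) (List.ofFn y)|) ∧
        (∑' y : Fin n → Zd d, |phiTilde d g (List.ofFn x) (List.ofFn y)|) ≤
          (Nat.factorial n : ℝ) * q₁ ^ (m + n) := by
  refine ⟨Real.exp 22, Real.exp_pos _, ?_⟩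
  intro g hg m _hm n x
  have hcle : c ≤ 1 := hc1.le
  have hkey : ∀ F : Finset (Fin n → Zd d),
      ∑ y ∈ F, |phiTilde d g (List.ofFn x) (List.ofFn y)|
        ≤ (Nat.factorial n : ℝ) * Real.exp 22 ^ (m + n) := by
    intro F
    have hlen : (List.ofFn x).length = m := List.length_ofFn (f := x)
    have h := main_bound hg hcle ((List.ofFn x).length + 2*n) (List.ofFn x) n le_rfl F
    rw [hlen] at h
    have hu : uFn g (List.ofFn x) ≤ Real.exp (2*m) := by
      rw [uFn]
      split
      · apply Real.exp_le_exp.mpr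
        rename_i hnd
        have h2 := sPair_le hg hcle hnd
        rw [hlen] at h2
        exact_mod_cast h2
      · positivity
    have hqe : qq ^ (m+n) * Real.exp (2*m) ≤ Real.exp 22 ^ (m + n) := by
      rw [qq, ← Real.exp_nat_mul, ← Real.exp_nat_mul, ← Real.exp_add]
      apply Real.exp_le_exp.mpr
      have hn0 : (0:ℝ) ≤ (n:ℝ) := Nat.cast_nonneg n
      have hm0 : (0:ℝ) ≤ (m:ℝ) := Nat.cast_nonneg m
      push_cast
      nlinarith [hn0, hm0]
    calc ∑ y ∈ F, |phiTilde d g (List.ofFn x) (List.ofFn y)|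
        ≤ (Nat.factorial n : ℝ) * qq ^ (m + n) * uFn g (List.ofFn x) := h
      _ ≤ (Nat.factorial n : ℝ) * qq ^ (m + n) * Real.exp (2*m) := by
          apply mul_le_mul_of_nonneg_left hu
          exact mul_nonneg (by positivity) (pow_nonneg qq_nonneg _)
      _ = (Nat.factorial n : ℝ) * (qq ^ (m + n) * Real.exp (2*m)) := by ring
      _ ≤ (Nat.factorial n : ℝ) * Real.exp 22 ^ (m + n) := by
          apply mul_le_mul_of_nonneg_left hqe (by positivity)
  have hsummable : Summable (fun y : Fin n → Zd d =>
      |phiTilde d g (List.ofFn x) (List.ofFn y)|) :=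
    summable_of_sum_le (fun y => abs_nonneg _) hkey
  exact ⟨hsummable, Summable.tsum_le_of_sum_le hsummable hkey⟩
end

section
/- Let g : ℤ^d → ℝ be bounded with g(x) = g(−x) for all x, let ψ be its sequence of Boltzmann factors, and set φ̃_X = ψ^{−1} * D_X ψ. Then φ̃_∅ = 𝟏, and for every finite sequence X = (x₁,…,x_m) with m ≥ 1 and every finite sequence Y = (y₁,…,y_n): φ̃_X(Y) = ∏_{i=2}^m (1 + g(x_i − x₁)) · ∑_{S⊆Y} (∏_{j: y_j∈S} g(y_j − x₁)) · φ̃_{(x₂,…,x_m,S)}(Y∖S), where the sum is over all subsequences S of Y, (x₂,…,x_m,S) is X with x₁ deleted and the entries of S appended, and Y∖S is Y with the entries of S deleted. -/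
open scoped BigOperators

open Filter Topology

lemma prod_pairs {m : ℕ} (f : Fin m → Fin m → ℝ) :
    ∏ p ∈ Finset.univ.filter (fun p : Fin m × Fin m => p.1 < p.2), f p.1 p.2
      = ∏ i : Fin m, ∏ j ∈ Finset.Ioi i, f i j := by
  rw [Finset.prod_filter, Fintype.prod_prod_type]
  refine Finset.prod_congr rfl fun i _ => ?_
  rw [← Finset.filter_lt_eq_Ioi, Finset.prod_filter]

lemma boltzL_cons (d : ℕ) (g : Zd d → ℝ) (x : Zd d) (X : List (Zd d)) :
    boltzL d g (x :: X) = (X.map fun y => 1 + g (x - y)).prod * boltzL d g X := by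
  unfold boltzL
  rw [prod_pairs (f := fun i j => 1 + g ((x::X).get i - (x::X).get j))]
  show (∏ i : Fin (X.length + 1), ∏ j ∈ Finset.Ioi i, (1 + g ((x::X).get i - (x::X).get j)))
      = _
  rw [Fin.prod_univ_succ]
  congr 1
  · rw [Fin.prod_Ioi_zero, ← Fin.prod_univ_fun_getElem X (fun y => 1 + g (x - y))]
    rfl
  · rw [prod_pairs (f := fun i j => 1 + g (X.get i - X.get j))]
    refine Finset.prod_congr rfl fun i _ => ?_
    rw [Fin.prod_Ioi_succ]
    rfl

lemma g_flip {d : ℕ} {g : Zd d → ℝ} (heven : ∀ x, g x = g (-x)) (a b : Zd d) :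
    g (a - b) = g (b - a) := by rw [heven (a - b), neg_sub]

lemma boltzL_perm (d : ℕ) (g : Zd d → ℝ) (heven : ∀ x, g x = g (-x)) :
    ∀ {X Y : List (Zd d)}, X.Perm Y → boltzL d g X = boltzL d g Y := by
  intro X Y h
  induction h with
  | nil => rfl
  | cons a h ih =>
    rw [boltzL_cons, boltzL_cons, ih, List.Perm.prod_eq (h.map _)]
  | swap x y l =>
    simp only [boltzL_cons, List.map_cons, List.prod_cons]
    rw [g_flip heven y x]
    ring
  | trans h1 h2 ih1 ih2 => exact ih1.trans ih2

lemma splits_append_perm {α : Type*} : ∀ (Y : List α), ∀ p ∈ splits Y, (p.1 ++ p.2).Perm Y := by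
  intro Y
  induction Y with
  | nil => simp [splits]
  | cons a l ih =>
    intro p hp
    simp only [splits, List.mem_append, List.mem_map] at hp
    rcases hp with ⟨q, hq, rfl⟩ | ⟨q, hq, rfl⟩
    · simpa using (ih q hq).cons a
    · exact (List.perm_middle).trans ((ih q hq).cons a)

lemma sum_map_add' {α : Type*} (l : List α) (f g : α → ℝ) :
    (l.map fun a => f a + g a).sum = (l.map f).sum + (l.map g).sum := by
  induction l with
  | nil => simp
  | cons a l ih => simp [ih]; ring

lemma prod_expand {α : Type*} (h : α → ℝ) :
    ∀ B : List α, ((splits B).map fun q => (q.1.map h).prod).sum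
      = (B.map fun y => 1 + h y).prod := by
  intro B
  induction B with
  | nil => simp [splits]
  | cons a l ih =>
    simp only [splits, List.map_append, List.map_map, List.sum_append, Function.comp_def,
      List.map_cons, List.prod_cons]
    rw [List.sum_map_mul_left, ih]
    ring

lemma expand_lemma (d : ℕ) (g : Zd d → ℝ) (heven : ∀ x, g x = g (-x))
    (h : Zd d → ℝ) (X' : List (Zd d)) (B : List (Zd d)) :
      (B.map fun y => 1 + h y).prod * boltzL d g (X' ++ B)
        = ((splits B).map fun q =>
            (q.1.map h).prod * boltzL d g (X' ++ (q.1 ++ q.2))).sum := by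
  have hc : ∀ q ∈ splits B,
      (q.1.map h).prod * boltzL d g (X' ++ (q.1 ++ q.2))
        = (q.1.map h).prod * boltzL d g (X' ++ B) := by
    intro q hq
    rw [boltzL_perm d g heven ((splits_append_perm B q hq).append_left X')]
  rw [List.map_congr_left hc, List.sum_map_mul_right, prod_expand]

lemma trisplit {α : Type*} : ∀ (Y : List α) (F : List α → List α → List α → ℝ),
    ((splits Y).map fun p => ((splits p.2).map fun q => F p.1 q.1 q.2).sum).sum
      = ((splits Y).map fun p => ((splits p.2).map fun q => F q.1 p.1 q.2).sum).sum := by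
  intro Y
  induction Y with
  | nil => intro F; simp [splits]
  | cons a l ih =>
    intro F
    simp only [splits, List.map_append, List.map_map, List.sum_append, Function.comp_def]
    rw [sum_map_add' (splits l)
        (fun p => ((splits p.2).map fun q => F p.1 (a :: q.1) q.2).sum)
        (fun p => ((splits p.2).map fun q => F p.1 q.1 (a :: q.2)).sum),
      sum_map_add' (splits l)
        (fun p => ((splits p.2).map fun q => F (a :: q.1) p.1 q.2).sum)
        (fun p => ((splits p.2).map fun q => F q.1 p.1 (a :: q.2)).sum)]
    linear_combination ih (fun A C D => F (a :: A) C D) + ih (fun A C D => F A (a :: C) D)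
      + ih (fun A C D => F A C (a :: D))

/-- For `g` bounded and even, the functions `φ̃_X = ψ⁻¹ * D_X ψ` satisfy
`φ̃_∅ = 𝟏` and the recurrence
`φ̃_X(Y) = ∏_{i=2}^m (1+g(x_i-x₁)) ∑_{S⊆Y} (∏_{y_j∈S} g(y_j-x₁)) φ̃_{(x₂,…,x_m,S)}(Y∖S)`. -/
theorem statement9 (d : ℕ) (hd : 1 ≤ d) (g : Zd d → ℝ)
    (hbdd : ∃ M : ℝ, ∀ x, |g x| ≤ M) (heven : ∀ x, g x = g (-x))
    (ψinv : List (Zd d) → ℝ) (hψinv : BoundedA d ψinv)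
    (hinv : ∀ X : List (Zd d), convA d ψinv (boltzL d g) X = oneA d X) :
    (∀ Y : List (Zd d),
      convA d ψinv (fun Y' => boltzL d g ([] ++ Y')) Y = oneA d Y) ∧
    (∀ (x₁ : Zd d) (X' Y : List (Zd d)),
      convA d ψinv (fun Y' => boltzL d g ((x₁ :: X') ++ Y')) Y =
        (X'.map fun x => 1 + g (x - x₁)).prod *
          ((splits Y).map fun p =>
            (p.1.map fun y => g (y - x₁)).prod *
              convA d ψinv (fun Y' => boltzL d g ((X' ++ p.1) ++ Y')) p.2).sum) := by
  constructor
  · intro Y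
    exact hinv Y
  · intro x₁ X' Y
    set c := (X'.map fun x => 1 + g (x - x₁)).prod with hc
    set h : Zd d → ℝ := fun y => g (y - x₁) with hh
    have key : ∀ B : List (Zd d), boltzL d g ((x₁ :: X') ++ B)
        = c * ((splits B).map fun q =>
            (q.1.map h).prod * boltzL d g ((X' ++ q.1) ++ q.2)).sum := by
      intro B
      have h1 : boltzL d g ((x₁ :: X') ++ B)
          = ((X' ++ B).map fun y => 1 + g (y - x₁)).prod * boltzL d g (X' ++ B) := by
        rw [List.cons_append, boltzL_cons]
        congr 1
        refine congrArg List.prod (List.map_congr_left fun y _ => ?_)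
        rw [g_flip heven x₁ y]
      rw [h1, List.map_append, List.prod_append, mul_assoc,
        expand_lemma d g heven h X' B]
      congr 1
      refine congrArg List.sum (List.map_congr_left fun q _ => ?_)
      rw [List.append_assoc]
    calc ((splits Y).map fun p => ψinv p.1 * boltzL d g ((x₁ :: X') ++ p.2)).sum
        = ((splits Y).map fun p => c * ((splits p.2).map fun q =>
            ψinv p.1 * ((q.1.map h).prod * boltzL d g ((X' ++ q.1) ++ q.2))).sum).sum := by
          refine congrArg List.sum (List.map_congr_left fun p _ => ?_)
          rw [key p.2, List.sum_map_mul_left]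
          ring
      _ = c * ((splits Y).map fun p => ((splits p.2).map fun q =>
            ψinv p.1 * ((q.1.map h).prod * boltzL d g ((X' ++ q.1) ++ q.2))).sum).sum :=
          List.sum_map_mul_left _ _ _
      _ = c * ((splits Y).map fun p => ((splits p.2).map fun q =>
            ψinv q.1 * ((p.1.map h).prod * boltzL d g ((X' ++ p.1) ++ q.2))).sum).sum :=
          congrArg (c * ·) (trisplit Y
            (fun A S T => ψinv A * ((S.map h).prod * boltzL d g ((X' ++ S) ++ T))))
      _ = c * ((splits Y).map fun p =>
            (p.1.map fun y => g (y - x₁)).prod *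
              convA d ψinv (fun Y' => boltzL d g ((X' ++ p.1) ++ Y')) p.2).sum := by
          refine congrArg (c * ·) (congrArg List.sum (List.map_congr_left fun p _ => ?_))
          show _ = (p.1.map h).prod *
            ((splits p.2).map fun q => ψinv q.1 * boltzL d g ((X' ++ p.1) ++ q.2)).sum
          rw [← List.sum_map_mul_left]
          exact congrArg List.sum (List.map_congr_left fun q _ => by ring)
end
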